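/- Let K ∈ ℝ^{n×n} be a symmetric positive semidefinite kernel matrix, λ > 0, and η_1,…,η_n > 0. For each j, the minimum of (1/n)Σ_i η_i g(z_i)² + λ‖g‖_H² over functions g in the RKHS H subject to g(z_j) = 1, when restricted to functions of the form g(·) = Σ_i c_i κ(z_i, ·) (finite-dimensional representer form, so g(z_i) = (Kc)_i and ‖g‖_H² = cᵀKc), equals (η_j/n) · ([K(K + nλ diag(η)^{-1})^{-1}]_{jj})^{-1}, provided [K(K + nλ diag(η)^{-1})^{-1}]_{jj} > 0. -/

import Mathlib

open Matrix

/-- Closed form of the regularized kernelized Christoffel function at sample `j`: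
the minimum of `(1/n) ∑ i, η i * (Kc) i ^ 2 + λ cᵀKc` over coefficient vectors `c` with
`(Kc) j = 1` equals `(η j / n) * ([K(K + nλ diag(η)⁻¹)⁻¹]_{jj})⁻¹`. -/
theorem christoffel_closed_form {n : ℕ} (K : Matrix (Fin n) (Fin n) ℝ)
    (hK : K.PosSemidef) (l : ℝ) (hl : 0 < l) (η : Fin n → ℝ) (hη : ∀ i, 0 < η i)
    (j : Fin n)
    (hjj : 0 < (K * (K + ((n : ℝ) * l) • (Matrix.diagonal η)⁻¹)⁻¹) j j) :
    IsLeast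
      {t : ℝ | ∃ c : Fin n → ℝ, (K *ᵥ c) j = 1 ∧
        t = (1 / (n : ℝ)) * ∑ i : Fin n, η i * ((K *ᵥ c) i) ^ 2 + l * (c ⬝ᵥ (K *ᵥ c))}
      ((η j / (n : ℝ)) * ((K * (K + ((n : ℝ) * l) • (Matrix.diagonal η)⁻¹)⁻¹) j j)⁻¹) := by
  have hn : (0 : ℝ) < n := by exact_mod_cast j.pos
  have hnl : (0 : ℝ) < (n : ℝ) * l := by positivity
  set D : Matrix (Fin n) (Fin n) ℝ := Matrix.diagonal η with hDdef
  set M : Matrix (Fin n) (Fin n) ℝ := K + ((n : ℝ) * l) • D⁻¹ with hMdef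
  have hKsymm : Kᵀ = K := hK.isHermitian
  have hDpd : D.PosDef := Matrix.PosDef.diagonal hη
  have hDinvH : (D⁻¹)ᵀ = D⁻¹ := by
    rw [← Matrix.conjTranspose_eq_transpose_of_trivial]
    exact hDpd.inv.isHermitian
  have hDdet : IsUnit D.det := by
    rw [hDdef, Matrix.det_diagonal]
    exact (Finset.prod_pos fun i _ => hη i).ne'.isUnit
  have hDDinv : D * D⁻¹ = 1 := Matrix.mul_nonsing_inv D hDdet
  -- M is positive definite, hence invertible
  have hMpd : M.PosDef := by
    refine Matrix.PosDef.posSemidef_add hK (Matrix.PosDef.of_dotProduct_mulVec_pos ?_ fun x hx => ?_)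
    · show ((((n : ℝ) * l) • D⁻¹)ᴴ) = ((n : ℝ) * l) • D⁻¹
      rw [Matrix.conjTranspose_eq_transpose_of_trivial, Matrix.transpose_smul, hDinvH]
    · rw [smul_mulVec, dotProduct_smul, smul_eq_mul]
      exact mul_pos hnl (hDpd.inv.dotProduct_mulVec_pos hx)
  have hMdet : IsUnit M.det := hMpd.isUnit.map (Matrix.detMonoidHom)
  have hMMinv : M * M⁻¹ = 1 := Matrix.mul_nonsing_inv M hMdet
  have hMinvsymm : (M⁻¹)ᵀ = M⁻¹ := hMpd.inv.isHermitian
  -- the optimal coefficient vector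
  set α : ℝ := ((K * M⁻¹) j j)⁻¹ with hαdef
  have hα : 0 < α := inv_pos.mpr hjj
  set cs : Fin n → ℝ := α • (M⁻¹ *ᵥ Pi.single j 1) with hcsdef
  -- the matrix of the quadratic form
  set A : Matrix (Fin n) (Fin n) ℝ := K * D * K + ((n : ℝ) * l) • K with hAdef
  have hAsymm : Aᵀ = A := by
    rw [hAdef, Matrix.transpose_add, Matrix.transpose_smul, hKsymm,
      Matrix.transpose_mul, Matrix.transpose_mul, hKsymm]
    rw [hDdef, Matrix.diagonal_transpose, Matrix.mul_assoc]
  have hApsd : A.PosSemidef := by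
    refine Matrix.PosSemidef.add ?_ ?_
    · have := (Matrix.PosSemidef.diagonal (d := η) fun i => (hη i).le
        ).mul_mul_conjTranspose_same K
      simpa [hDdef, Matrix.conjTranspose_eq_transpose_of_trivial, hKsymm] using this
    · refine Matrix.PosSemidef.of_dotProduct_mulVec_nonneg ?_ fun x => ?_
      · show ((((n : ℝ) * l) • K)ᴴ) = ((n : ℝ) * l) • K
        rw [Matrix.conjTranspose_eq_transpose_of_trivial, Matrix.transpose_smul, hKsymm]
      · rw [smul_mulVec, dotProduct_smul]
        exact mul_nonneg hnl.le (hK.dotProduct_mulVec_nonneg x)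
  -- A = K * D * M
  have hAM : A = K * D * M := by
    rw [hMdef, Matrix.mul_add, Matrix.mul_smul, Matrix.mul_assoc K D D⁻¹,
      hDDinv, Matrix.mul_one, hAdef]
  -- A *ᵥ cs = (α * η j) • (row j of K)
  have hAcs : A *ᵥ cs = (α * η j) • fun i => K j i := by
    rw [hcsdef, Matrix.mulVec_smul, Matrix.mulVec_mulVec, hAM,
      Matrix.mul_assoc (K * D) M M⁻¹, hMMinv, Matrix.mul_one]
    funext i
    simp only [Pi.smul_apply, smul_eq_mul, Matrix.mulVec_single_one, Matrix.col_apply, mul_one]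
    rw [Matrix.mul_diagonal]
    have : K i j = K j i := by
      conv_lhs => rw [← hKsymm, Matrix.transpose_apply]
    rw [this]
    ring
  -- the constraint holds at cs
  have hKcs : (K *ᵥ cs) j = 1 := by
    rw [hcsdef, Matrix.mulVec_smul, Matrix.mulVec_mulVec]
    simp only [Pi.smul_apply, Matrix.mulVec_single_one, Matrix.col_apply, mul_one, smul_eq_mul]
    exact inv_mul_cancel₀ hjj.ne'
  -- rewriting the objective as a quadratic form
  have hrow : ∀ c : Fin n → ℝ, (fun i => K j i) ⬝ᵥ c = (K *ᵥ c) j := fun c => rfl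
  have hquad : ∀ c : Fin n → ℝ,
      (∑ i : Fin n, η i * ((K *ᵥ c) i) ^ 2) + ((n : ℝ) * l) * (c ⬝ᵥ (K *ᵥ c))
        = c ⬝ᵥ (A *ᵥ c) := by
    intro c
    rw [hAdef, Matrix.add_mulVec, dotProduct_add, smul_mulVec,
      dotProduct_smul]
    congr 1
    rw [← Matrix.mulVec_mulVec, ← Matrix.mulVec_mulVec,
      Matrix.dotProduct_mulVec c K, ← Matrix.mulVec_transpose, hKsymm]
    rw [hDdef]
    simp only [dotProduct, Matrix.mulVec_diagonal]
    refine Finset.sum_congr rfl fun i _ => by ring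
  -- the value of the quadratic form at cs
  have hval : cs ⬝ᵥ (A *ᵥ cs) = α * η j := by
    rw [hAcs, dotProduct_smul, smul_eq_mul, dotProduct_comm, hrow, hKcs, mul_one]
  -- objective rewriting
  have hobj : ∀ c : Fin n → ℝ,
      (1 / (n : ℝ)) * ∑ i : Fin n, η i * ((K *ᵥ c) i) ^ 2 + l * (c ⬝ᵥ (K *ᵥ c))
        = (1 / (n : ℝ)) * (c ⬝ᵥ (A *ᵥ c)) := by
    intro c
    rw [← hquad c]
    field_simp
  have htarget : (η j / (n : ℝ)) * ((K * M⁻¹) j j)⁻¹ = (1 / (n : ℝ)) * (α * η j) := by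
    rw [← hαdef]; ring
  constructor
  · exact ⟨cs, hKcs, by rw [hobj cs, hval, htarget]⟩
  · rintro t ⟨c, hc1, rfl⟩
    rw [hobj c, htarget]
    have hdiff : 0 ≤ (c - cs) ⬝ᵥ (A *ᵥ (c - cs)) := by
      simpa using hApsd.dotProduct_mulVec_nonneg (c - cs)
    have hcross : (c - cs) ⬝ᵥ (A *ᵥ cs) = 0 := by
      rw [hAcs, dotProduct_smul, smul_eq_mul, dotProduct_comm, hrow,
        Matrix.mulVec_sub]
      simp [hc1, hKcs]
    have hcross' : cs ⬝ᵥ (A *ᵥ (c - cs)) = 0 := by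
      rw [Matrix.dotProduct_mulVec, ← Matrix.mulVec_transpose, hAsymm,
        dotProduct_comm]
      exact hcross
    have hexpand : c ⬝ᵥ (A *ᵥ c)
        = (c - cs) ⬝ᵥ (A *ᵥ (c - cs)) + α * η j := by
      have hsplit : (c - cs) + cs = c := by abel
      calc c ⬝ᵥ (A *ᵥ c) = ((c - cs) + cs) ⬝ᵥ (A *ᵥ ((c - cs) + cs)) := by
            rw [hsplit]
        _ = (c - cs) ⬝ᵥ (A *ᵥ (c - cs)) + (c - cs) ⬝ᵥ (A *ᵥ cs)
              + (cs ⬝ᵥ (A *ᵥ (c - cs)) + cs ⬝ᵥ (A *ᵥ cs)) := by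
            rw [Matrix.mulVec_add, add_dotProduct, dotProduct_add, dotProduct_add]
        _ = (c - cs) ⬝ᵥ (A *ᵥ (c - cs)) + α * η j := by
            rw [hcross, hcross', hval]; ring
    rw [hexpand]
    have h1n : 0 < 1 / (n : ℝ) := by positivity
    nlinarith [hdiff]
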